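/- Let (X_n) be a uniformly bounded martingale difference sequence, |X_n| ≤ C a.s., with conditional variances v_n = E[X_n² | ℱ_{n-1}]. Then almost surely: ∑_n v_n < ∞ if and only if ∑_n X_n converges. -/

import Mathlib

open Filter MeasureTheory

section Helpers

variable {Ω : Type*} {m0 : MeasurableSpace Ω} {μ : Measure Ω} [IsProbabilityMeasure μ]
  {ℱ : Filtration ℕ m0}

lemma int_of_bdd {f : Ω → ℝ} {c : ℝ} (hm : AEStronglyMeasurable f μ)
    (hb : ∀ᵐ ω ∂μ, |f ω| ≤ c) : Integrable f μ :=
  memLp_one_iff_integrable.1 (MemLp.of_bound hm c (by simpa [Real.norm_eq_abs] using hb))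

variable {D : ℕ → Ω → ℝ} {C : ℝ} {G : ℕ → Set Ω}

lemma gated_main
    (hadp : ∀ n, StronglyMeasurable[ℱ (n + 1)] (D n))
    (hbdd : ∀ n, ∀ᵐ ω ∂μ, |D n ω| ≤ C) (hC : 0 < C)
    (hmean : ∀ n, μ[D n | ℱ n] =ᵐ[μ] 0)
    (hG : ∀ k, MeasurableSet[ℱ k] (G k)) :
    Martingale (fun n ω => ∑ k ∈ Finset.range n, (G k).indicator (D k) ω) ℱ μ ∧
    (∀ n, ∫ ω, (∑ k ∈ Finset.range n, (G k).indicator (D k) ω) ^ 2 ∂μ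
      = ∑ k ∈ Finset.range n, ∫ ω, (G k).indicator (fun ω' => D k ω' ^ 2) ω ∂μ) ∧
    ∀ n, Integrable (fun ω => (∑ k ∈ Finset.range n, (G k).indicator (D k) ω) ^ 2) μ := by
  set Y : ℕ → Ω → ℝ := fun n ω => ∑ k ∈ Finset.range n, (G k).indicator (D k) ω with hY
  have hIsm : ∀ k, StronglyMeasurable[ℱ (k + 1)] ((G k).indicator (D k)) :=
    fun k => (hadp k).indicator (ℱ.mono k.le_succ _ (hG k))
  have hIbdd : ∀ k, ∀ᵐ ω ∂μ, |(G k).indicator (D k) ω| ≤ C := by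
    intro k
    filter_upwards [hbdd k] with ω hω
    by_cases h : ω ∈ G k <;> simp [Set.indicator_apply, h, hω, hC.le]
  have hYsm : ∀ n, StronglyMeasurable[ℱ n] (Y n) := by
    intro n
    have := Finset.stronglyMeasurable_fun_sum (M := ℝ) (Finset.range n)
      (f := fun k => (G k).indicator (D k))
      (fun k hk => (hIsm k).mono (ℱ.mono (Finset.mem_range.1 hk)))
    simpa [hY] using this
  have hYbdd : ∀ n, ∀ᵐ ω ∂μ, |Y n ω| ≤ n * C := by
    intro n
    filter_upwards [ae_all_iff.2 hIbdd] with ω hω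
    calc |Y n ω| ≤ ∑ k ∈ Finset.range n, |(G k).indicator (D k) ω| :=
          Finset.abs_sum_le_sum_abs _ _
      _ ≤ ∑ k ∈ Finset.range n, C := Finset.sum_le_sum fun k _ => hω k
      _ = n * C := by simp [mul_comm]
  have intY : ∀ n, Integrable (Y n) μ := fun n =>
    int_of_bdd ((hYsm n).mono (ℱ.le n)).aestronglyMeasurable (hYbdd n)
  have intI : ∀ k, Integrable ((G k).indicator (D k)) μ := fun k =>
    int_of_bdd ((hIsm k).mono (ℱ.le (k + 1))).aestronglyMeasurable (hIbdd k)
  have hsucc : ∀ n, Y (n + 1) = Y n + (G n).indicator (D n) := by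
    intro n; funext ω; simp [hY, Finset.sum_range_succ]
  have hindmul : ∀ n, (G n).indicator (D n) = (G n).indicator (1 : Ω → ℝ) * D n := by
    intro n; funext ω; by_cases h : ω ∈ G n <;> simp [Set.indicator_apply, h]
  have hmart : Martingale Y ℱ μ := by
    refine martingale_nat (fun n => hYsm n) intY fun i => ?_
    have h1 : μ[Y (i + 1)|ℱ i] =ᵐ[μ] μ[Y i|ℱ i] + μ[(G i).indicator (D i)|ℱ i] := by
      rw [hsucc i]; exact condExp_add (intY i) (intI i) _
    have h2 : μ[Y i|ℱ i] = Y i := condExp_of_stronglyMeasurable (ℱ.le i) (hYsm i) (intY i)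
    have h3 : μ[(G i).indicator (D i)|ℱ i] =ᵐ[μ] 0 := by
      rw [hindmul i]
      refine (condExp_mul_of_stronglyMeasurable_left (stronglyMeasurable_one.indicator (hG i))
        (by rw [← hindmul i]; exact intI i)
        (int_of_bdd ((hadp i).mono (ℱ.le _)).aestronglyMeasurable (hbdd i))).trans ?_
      filter_upwards [hmean i] with ω hω
      simp [hω]
    filter_upwards [h1, h3] with ω hω1 hω3
    simp [hω1, h2, hω3]
  have intYsq : ∀ n, Integrable (fun ω => Y n ω ^ 2) μ := by
    intro n
    refine int_of_bdd (c := (n * C) ^ 2)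
      (((hYsm n).mono (ℱ.le n)).pow 2).aestronglyMeasurable ?_
    filter_upwards [hYbdd n] with ω hω
    rw [abs_pow]
    exact pow_le_pow_left₀ (abs_nonneg _) hω 2
  refine ⟨hmart, ?_, intYsq⟩
  intro n
  induction n with
  | zero => simp [hY]
  | succ n ih =>
    set h : Ω → ℝ := (G n).indicator (Y n) with hh
    have hexp : ∀ ω, Y (n + 1) ω ^ 2 =
        Y n ω ^ 2 + (h ω * D n ω) * 2 + (G n).indicator (fun ω' => D n ω' ^ 2) ω := by
      intro ω
      rw [hsucc n]
      by_cases hm : ω ∈ G n <;>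
        simp [hh, Set.indicator_apply, hm, Pi.add_apply] <;> ring
    have hhsm : StronglyMeasurable[ℱ n] h := (hYsm n).indicator (hG n)
    have hhbdd : ∀ᵐ ω ∂μ, |h ω| ≤ n * C := by
      filter_upwards [hYbdd n] with ω hω
      by_cases hm : ω ∈ G n <;> simp [hh, Set.indicator_apply, hm, hω]
      positivity
    have intYsq' : Integrable (fun ω => Y n ω ^ 2) μ := intYsq n
    have intCross : Integrable (fun ω => h ω * D n ω) μ := by
      refine int_of_bdd (c := (n * C) * C)
        (((hhsm.mono (ℱ.le n)).mul ((hadp n).mono (ℱ.le _))).aestronglyMeasurable) ?_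
      filter_upwards [hhbdd, hbdd n] with ω h1 h2
      rw [abs_mul]
      exact mul_le_mul h1 h2 (abs_nonneg _) (by positivity)
    have intLast : Integrable ((G n).indicator (fun ω' => D n ω' ^ 2)) μ := by
      refine int_of_bdd (c := C ^ 2)
        ((((hadp n).mono (ℱ.le _)).pow 2).indicator (ℱ.le n _ (hG n))).aestronglyMeasurable ?_
      filter_upwards [hbdd n] with ω hω
      by_cases hm : ω ∈ G n <;> simp [Set.indicator_apply, hm]
      · rw [← sq_abs]; exact pow_le_pow_left₀ (abs_nonneg _) hω 2
      · positivity
    have hcross0 : ∫ ω, h ω * D n ω ∂μ = 0 := by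
      have hint : Integrable (h * D n) μ := intCross
      have hcd : μ[h * D n|ℱ n] =ᵐ[μ] 0 := by
        refine (condExp_mul_of_stronglyMeasurable_left hhsm hint
          (int_of_bdd ((hadp n).mono (ℱ.le _)).aestronglyMeasurable (hbdd n))).trans ?_
        filter_upwards [hmean n] with ω hω
        simp [hω]
      calc ∫ ω, h ω * D n ω ∂μ = ∫ x, (h * D n) x ∂μ := rfl
        _ = ∫ x, (μ[h * D n|ℱ n]) x ∂μ := (integral_condExp (μ := μ) (f := h * D n) (ℱ.le n)).symm
        _ = ∫ x, (0 : Ω → ℝ) x ∂μ := integral_congr_ae hcd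
        _ = 0 := by simp
    have step : ∫ ω, Y (n + 1) ω ^ 2 ∂μ
        = ∫ ω, Y n ω ^ 2 ∂μ + ∫ ω, (G n).indicator (fun ω' => D n ω' ^ 2) ω ∂μ := by
      calc ∫ ω, Y (n + 1) ω ^ 2 ∂μ
          = ∫ ω, (Y n ω ^ 2 + (h ω * D n ω) * 2
              + (G n).indicator (fun ω' => D n ω' ^ 2) ω) ∂μ :=
            integral_congr_ae (Filter.Eventually.of_forall hexp)
        _ = ∫ ω, (Y n ω ^ 2 + (h ω * D n ω) * 2) ∂μ
              + ∫ ω, (G n).indicator (fun ω' => D n ω' ^ 2) ω ∂μ :=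
            integral_add ((intYsq n).add (intCross.mul_const 2)) intLast
        _ = (∫ ω, Y n ω ^ 2 ∂μ + ∫ ω, (h ω * D n ω) * 2 ∂μ)
              + ∫ ω, (G n).indicator (fun ω' => D n ω' ^ 2) ω ∂μ := by
            exact congrArg (· + ∫ ω, (G n).indicator (fun ω' => D n ω' ^ 2) ω ∂μ)
              (integral_add (intYsq n) (intCross.mul_const 2))
        _ = _ := by rw [integral_mul_const, hcross0]; ring
    rw [show (fun ω => (∑ k ∈ Finset.range (n + 1), (G k).indicator (D k) ω) ^ 2)
        = fun ω => Y (n + 1) ω ^ 2 from rfl] at *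
    rw [step, Finset.sum_range_succ, ih]

lemma gated_var
    (hadp : ∀ n, StronglyMeasurable[ℱ (n + 1)] (D n))
    (hbdd : ∀ n, ∀ᵐ ω ∂μ, |D n ω| ≤ C)
    {k : ℕ} (hGk : MeasurableSet[ℱ k] (G k)) :
    ∫ ω, (G k).indicator (fun ω' => D k ω' ^ 2) ω ∂μ
      = ∫ ω, (G k).indicator (μ[fun ω' => D k ω' ^ 2|ℱ k]) ω ∂μ := by
  have hint : Integrable (fun ω => D k ω ^ 2) μ := by
    refine int_of_bdd (c := C ^ 2)
      (((hadp k).mono (ℱ.le _)).pow 2).aestronglyMeasurable ?_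
    filter_upwards [hbdd k] with ω hω
    rw [abs_pow]
    exact pow_le_pow_left₀ (abs_nonneg _) hω 2
  rw [integral_indicator (ℱ.le k _ hGk), integral_indicator (ℱ.le k _ hGk)]
  exact (setIntegral_condExp (ℱ.le k) hint hGk).symm

lemma dir2K
    (hadp : ∀ n, StronglyMeasurable[ℱ (n + 1)] (D n))
    (hbdd : ∀ n, ∀ᵐ ω ∂μ, |D n ω| ≤ C) (hC : 0 < C)
    (hmean : ∀ n, μ[D n | ℱ n] =ᵐ[μ] 0) (K : ℕ) :
    ∀ᵐ ω ∂μ, (∀ n, |∑ k ∈ Finset.range n, D k ω| ≤ K) →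
      Summable (fun k => (μ[fun ω' => D k ω' ^ 2|ℱ k]) ω) := by
  classical
  set w : ℕ → Ω → ℝ := fun k => μ[fun ω' => D k ω' ^ 2|ℱ k] with hw
  set S : ℕ → Ω → ℝ := fun n ω => ∑ k ∈ Finset.range n, D k ω with hS
  set G : ℕ → Set Ω := fun k => {ω | ∀ j ≤ k, |S j ω| ≤ (K : ℝ)} with hGdef
  have hSsm : ∀ k, StronglyMeasurable[ℱ k] (S k) := by
    intro k
    have := Finset.stronglyMeasurable_fun_sum (M := ℝ) (Finset.range k) (f := D)
      (fun j hj => (hadp j).mono (ℱ.mono (Finset.mem_range.1 hj)))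
    simpa [hS] using this
  have hG : ∀ k, MeasurableSet[ℱ k] (G k) := by
    intro k
    have he : G k = ⋂ j, ⋂ (_ : j ≤ k), {ω | |S j ω| ≤ (K : ℝ)} := by
      ext ω; simp [hGdef, Set.mem_iInter, Set.mem_setOf_eq]
    rw [he]
    refine MeasurableSet.iInter fun j => MeasurableSet.iInter fun hj => ?_
    have hsj : StronglyMeasurable[ℱ k] (S j) := (hSsm j).mono (ℱ.mono hj)
    have habs : {ω | |S j ω| ≤ (K : ℝ)} = {ω | S j ω ≤ (K : ℝ)} ∩ {ω | -(K : ℝ) ≤ S j ω} := by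
      ext ω; simp [abs_le, and_comm]
    rw [habs]
    exact (hsj.measurableSet_le stronglyMeasurable_const).inter
      (stronglyMeasurable_const.measurableSet_le hsj)
  obtain ⟨hmart, hL2, hint2⟩ := gated_main hadp hbdd hC hmean hG
  have hGanti : ∀ {j k : ℕ}, j ≤ k → ∀ {ω}, ω ∈ G k → ω ∈ G j := by
    intro j k hjk ω hω i hij
    exact hω i (hij.trans hjk)
  have hYboundAE : ∀ᵐ ω ∂μ, ∀ n,
      |∑ k ∈ Finset.range n, (G k).indicator (D k) ω| ≤ K + C := by
    filter_upwards [ae_all_iff.2 hbdd] with ω hD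
    intro n
    induction n with
    | zero => simpa using add_nonneg (Nat.cast_nonneg K) hC.le
    | succ n ihn =>
      by_cases hm : ω ∈ G n
      · have hYeq : ∑ k ∈ Finset.range (n + 1), (G k).indicator (D k) ω = S (n + 1) ω :=
          Finset.sum_congr rfl fun k hk =>
            Set.indicator_of_mem (hGanti (Nat.lt_succ_iff.1 (Finset.mem_range.1 hk)) hm) _
        have hm' : ∀ j ≤ n, |S j ω| ≤ (K : ℝ) := hm
        have hSe : S (n + 1) ω = S n ω + D n ω := by simp [hS, Finset.sum_range_succ]
        rw [hYeq, hSe]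
        calc |S n ω + D n ω| ≤ |S n ω| + |D n ω| := abs_add_le _ _
          _ ≤ K + C := add_le_add (hm' n le_rfl) (hD n)
      · rw [Finset.sum_range_succ, Set.indicator_of_notMem hm, add_zero]
        exact ihn
  have hwint : ∀ k, Integrable ((G k).indicator (w k)) μ := fun k =>
    integrable_condExp.indicator (ℱ.le k _ (hG k))
  have hwnn : ∀ k, 0 ≤ᵐ[μ] (G k).indicator (w k) := by
    intro k
    filter_upwards [condExp_nonneg (μ := μ) (m := ℱ k)
      (Filter.Eventually.of_forall fun ω' => sq_nonneg (D k ω'))] with ω hω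
    by_cases hm : ω ∈ G k <;> simp [Set.indicator_apply, hm]
    exact hω
  have hL2bdd : ∀ n,
      ∑ k ∈ Finset.range n, ∫ ω, (G k).indicator (w k) ω ∂μ ≤ ((K : ℝ) + C) ^ 2 := by
    intro n
    have e1 : ∀ k ∈ Finset.range n,
        ∫ ω, (G k).indicator (fun ω' => D k ω' ^ 2) ω ∂μ
          = ∫ ω, (G k).indicator (w k) ω ∂μ := fun k _ => gated_var hadp hbdd (hG k)
    rw [← Finset.sum_congr rfl e1, ← hL2 n]
    calc ∫ ω, (∑ k ∈ Finset.range n, (G k).indicator (D k) ω) ^ 2 ∂μ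
        ≤ ∫ _, ((K : ℝ) + C) ^ 2 ∂μ := by
          refine integral_mono_ae (hint2 n) (integrable_const _) ?_
          filter_upwards [hYboundAE] with ω hb
          rw [← sq_abs]
          exact pow_le_pow_left₀ (abs_nonneg _) (hb n) 2
      _ = ((K : ℝ) + C) ^ 2 := by simp
  have hmeasw : ∀ k, Measurable (fun ω => ENNReal.ofReal ((G k).indicator (w k) ω)) := by
    intro k
    exact ENNReal.measurable_ofReal.comp
      (((stronglyMeasurable_condExp.mono (ℱ.le k)).measurable).indicator (ℱ.le k _ (hG k)))
  have hlin : ∫⁻ ω, ∑' k, ENNReal.ofReal ((G k).indicator (w k) ω) ∂μ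
      ≤ ENNReal.ofReal (((K : ℝ) + C) ^ 2) := by
    rw [lintegral_tsum fun k => (hmeasw k).aemeasurable]
    have heq : ∀ k, ∫⁻ ω, ENNReal.ofReal ((G k).indicator (w k) ω) ∂μ
        = ENNReal.ofReal (∫ ω, (G k).indicator (w k) ω ∂μ) := fun k =>
      (ofReal_integral_eq_lintegral_ofReal (hwint k) (hwnn k)).symm
    simp_rw [heq]
    rw [ENNReal.tsum_eq_iSup_sum]
    refine iSup_le fun s => ?_
    obtain ⟨n, hn⟩ := s.exists_nat_subset_range
    calc ∑ k ∈ s, ENNReal.ofReal (∫ ω, (G k).indicator (w k) ω ∂μ)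
        ≤ ∑ k ∈ Finset.range n, ENNReal.ofReal (∫ ω, (G k).indicator (w k) ω ∂μ) :=
          Finset.sum_le_sum_of_subset hn
      _ = ENNReal.ofReal (∑ k ∈ Finset.range n, ∫ ω, (G k).indicator (w k) ω ∂μ) :=
          (ENNReal.ofReal_sum_of_nonneg fun i _ => integral_nonneg_of_ae (hwnn i)).symm
      _ ≤ ENNReal.ofReal (((K : ℝ) + C) ^ 2) := ENNReal.ofReal_le_ofReal (hL2bdd n)
  have hfin : ∀ᵐ ω ∂μ, ∑' k, ENNReal.ofReal ((G k).indicator (w k) ω) < ⊤ :=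
    ae_lt_top' (AEMeasurable.ennreal_tsum fun k => (hmeasw k).aemeasurable)
      (lt_of_le_of_lt hlin ENNReal.ofReal_lt_top).ne
  have hwnn' : ∀ᵐ ω ∂μ, ∀ k, 0 ≤ w k ω := ae_all_iff.2 fun k =>
    condExp_nonneg (Filter.Eventually.of_forall fun ω' => sq_nonneg (D k ω'))
  filter_upwards [hfin, hwnn'] with ω hfi hnn
  intro hb
  have hmem : ∀ k, ω ∈ G k := fun k j _ => hb j
  have h1 : Summable fun k => (ENNReal.ofReal ((G k).indicator (w k) ω)).toReal :=
    ENNReal.summable_toReal hfi.ne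
  refine h1.congr fun k => ?_
  rw [Set.indicator_of_mem (hmem k), ENNReal.toReal_ofReal (hnn k)]

lemma dir1K
    (hadp : ∀ n, StronglyMeasurable[ℱ (n + 1)] (D n))
    (hbdd : ∀ n, ∀ᵐ ω ∂μ, |D n ω| ≤ C) (hC : 0 < C)
    (hmean : ∀ n, μ[D n | ℱ n] =ᵐ[μ] 0) (K : ℕ) :
    ∀ᵐ ω ∂μ, (∀ k, ∑ j ∈ Finset.range (k + 1), (μ[fun ω' => D j ω' ^ 2|ℱ j]) ω ≤ (K : ℝ)) →
      ∃ l, Tendsto (fun n => ∑ k ∈ Finset.range n, D k ω) atTop (nhds l) := by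
  classical
  set w : ℕ → Ω → ℝ := fun k => μ[fun ω' => D k ω' ^ 2|ℱ k] with hw
  set G : ℕ → Set Ω := fun k => {ω | ∑ j ∈ Finset.range (k + 1), w j ω ≤ (K : ℝ)} with hGdef
  have hG : ∀ k, MeasurableSet[ℱ k] (G k) := by
    intro k
    have hsm : StronglyMeasurable[ℱ k] (fun ω => ∑ j ∈ Finset.range (k + 1), w j ω) := by
      have := Finset.stronglyMeasurable_fun_sum (M := ℝ) (Finset.range (k + 1)) (f := w)
        (fun j hj => stronglyMeasurable_condExp.mono (ℱ.mono (Nat.lt_succ_iff.1 (Finset.mem_range.1 hj))))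
      simpa using this
    exact measurableSet_le hsm.measurable measurable_const
  obtain ⟨hmart, hL2, hint2⟩ := gated_main hadp hbdd hC hmean hG
  have hwnnae : ∀ᵐ ω ∂μ, ∀ k, 0 ≤ w k ω := ae_all_iff.2 fun k =>
    condExp_nonneg (Filter.Eventually.of_forall fun ω' => sq_nonneg (D k ω'))
  have hwint : ∀ k, Integrable ((G k).indicator (w k)) μ := fun k =>
    integrable_condExp.indicator (ℱ.le k _ (hG k))
  have hpt : ∀ᵐ ω ∂μ, ∀ n, ∑ k ∈ Finset.range n, (G k).indicator (w k) ω ≤ (K : ℝ) := by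
    filter_upwards [hwnnae] with ω hnn
    intro n
    induction n with
    | zero => simpa using (Nat.cast_nonneg K : (0 : ℝ) ≤ K)
    | succ n ihn =>
      by_cases hm : ω ∈ G n
      · have hm' : ∑ j ∈ Finset.range (n + 1), w j ω ≤ (K : ℝ) := hm
        calc ∑ k ∈ Finset.range (n + 1), (G k).indicator (w k) ω
            ≤ ∑ k ∈ Finset.range (n + 1), w k ω := by
              refine Finset.sum_le_sum fun k _ => ?_
              by_cases h : ω ∈ G k <;> simp [Set.indicator_apply, h, hnn k]
          _ ≤ (K : ℝ) := hm'
      · rw [Finset.sum_range_succ, Set.indicator_of_notMem hm, add_zero]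
        exact ihn
  have hL2bdd : ∀ n, ∫ ω, (∑ k ∈ Finset.range n, (G k).indicator (D k) ω) ^ 2 ∂μ ≤ (K : ℝ) := by
    intro n
    have e1 : ∀ k ∈ Finset.range n,
        ∫ ω, (G k).indicator (fun ω' => D k ω' ^ 2) ω ∂μ
          = ∫ ω, (G k).indicator (w k) ω ∂μ := fun k _ => gated_var hadp hbdd (hG k)
    rw [hL2 n, Finset.sum_congr rfl e1, ← integral_finset_sum _ fun k _ => hwint k]
    calc ∫ ω, ∑ k ∈ Finset.range n, (G k).indicator (w k) ω ∂μ
        ≤ ∫ _, (K : ℝ) ∂μ := by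
          refine integral_mono_ae (integrable_finset_sum _ fun k _ => hwint k)
            (integrable_const _) ?_
          filter_upwards [hpt] with ω h using h n
      _ = (K : ℝ) := by simp
  have heLp : ∀ n, eLpNorm (fun ω => ∑ k ∈ Finset.range n, (G k).indicator (D k) ω) 1 μ
      ≤ ENNReal.ofReal (1 + K) := by
    intro n
    have intY : Integrable (fun ω => ∑ k ∈ Finset.range n, (G k).indicator (D k) ω) μ :=
      hmart.integrable n
    rw [eLpNorm_one_eq_lintegral_enorm, ← ofReal_integral_norm_eq_lintegral_enorm intY]
    refine ENNReal.ofReal_le_ofReal ?_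
    have h1 : ∫ ω, ‖∑ k ∈ Finset.range n, (G k).indicator (D k) ω‖ ∂μ
        ≤ ∫ ω, (1 + (∑ k ∈ Finset.range n, (G k).indicator (D k) ω) ^ 2) ∂μ := by
      refine integral_mono intY.norm ((integrable_const 1).add (hint2 n)) fun ω => ?_
      rw [Real.norm_eq_abs]
      nlinarith [sq_nonneg (|∑ k ∈ Finset.range n, (G k).indicator (D k) ω| - 1),
        abs_nonneg (∑ k ∈ Finset.range n, (G k).indicator (D k) ω),
        sq_abs (∑ k ∈ Finset.range n, (G k).indicator (D k) ω)]
    refine h1.trans ?_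
    rw [integral_add (integrable_const 1) (hint2 n)]
    have h2 : ∫ (_ : Ω), (1 : ℝ) ∂μ = 1 := by simp
    rw [h2]
    linarith [hL2bdd n]
  have hconv := hmart.submartingale.exists_ae_tendsto_of_bdd
    (R := (1 + (K : ℝ)).toNNReal) fun n => heLp n
  filter_upwards [hconv] with ω hc hK
  obtain ⟨c, hc⟩ := hc
  refine ⟨c, ?_⟩
  have hmem : ∀ k, ω ∈ G k := fun k => hK k
  refine Filter.Tendsto.congr (fun n => ?_) hc
  exact Finset.sum_congr rfl fun k _ => Set.indicator_of_mem (hmem k) _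

end Helpers

theorem stmt_8 {Ω : Type*} {m0 : MeasurableSpace Ω} (μ : Measure Ω) [IsProbabilityMeasure μ]
    (ℱ : Filtration ℕ m0) (X : ℕ → Ω → ℝ) (C : ℝ) (hC : 0 < C)
    (hadapted : ∀ n, StronglyMeasurable[ℱ (n + 1)] (X (n + 1)))
    (hbdd : ∀ n, ∀ᵐ ω ∂μ, |X (n + 1) ω| ≤ C)
    (hmean : ∀ n, μ[X (n + 1) | ℱ n] =ᵐ[μ] 0)
    (v : ℕ → Ω → ℝ)
    (hv : ∀ n, v (n + 1) =ᵐ[μ] μ[fun ω => (X (n + 1) ω) ^ 2 | ℱ n]) :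
    ∀ᵐ ω ∂μ, (Summable (fun n => v (n + 1) ω) ↔
      ∃ l : ℝ, Tendsto (fun n => ∑ k ∈ Finset.range n, X (k + 1) ω) atTop (nhds l)) := by
  have h1 := ae_all_iff.2 fun K : ℕ =>
    dir1K (D := fun n => X (n + 1)) hadapted hbdd hC hmean K
  have h2 := ae_all_iff.2 fun K : ℕ =>
    dir2K (D := fun n => X (n + 1)) hadapted hbdd hC hmean K
  have hveq : ∀ᵐ ω ∂μ, ∀ n, v (n + 1) ω = (μ[fun ω' => X (n + 1) ω' ^ 2|ℱ n]) ω :=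
    ae_all_iff.2 fun n => hv n
  have hwnn : ∀ᵐ ω ∂μ, ∀ k, 0 ≤ (μ[fun ω' => X (k + 1) ω' ^ 2|ℱ k]) ω :=
    ae_all_iff.2 fun k => condExp_nonneg (Filter.Eventually.of_forall fun ω' => sq_nonneg _)
  filter_upwards [h1, h2, hveq, hwnn] with ω hω1 hω2 hveqω hnn
  constructor
  · intro hsum
    have hsum' : Summable fun k => (μ[fun ω' => X (k + 1) ω' ^ 2|ℱ k]) ω :=
      hsum.congr fun k => hveqω k
    set T := ∑' k, (μ[fun ω' => X (k + 1) ω' ^ 2|ℱ k]) ω with hT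
    refine hω1 ⌈T⌉₊ fun k => ?_
    calc ∑ j ∈ Finset.range (k + 1), (μ[fun ω' => X (j + 1) ω' ^ 2|ℱ j]) ω
        ≤ T := Summable.sum_le_tsum _ (fun i _ => hnn i) hsum'
      _ ≤ (⌈T⌉₊ : ℝ) := Nat.le_ceil T
  · rintro ⟨l, hl⟩
    have hb : BddAbove (Set.range fun n => |∑ k ∈ Finset.range n, X (k + 1) ω|) :=
      (hl.abs).bddAbove_range
    obtain ⟨M, hM⟩ := hb
    have h3 := hω2 ⌈M⌉₊ fun n => le_trans (hM ⟨n, rfl⟩) (Nat.le_ceil M)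
    exact h3.congr fun k => (hveqω k).symm
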